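/- Let m be even and q ≥ 2, and consider exponent vectors α ∈ {0,…,q-1}^m. If every α satisfying Π_{i=1}^m (α_i + 1) < q^m - t also satisfies Π_{i=1}^m (q - α_i) ≥ q^m - t, then t ≥ q^m - q^{m/2}. -/
import Mathlib


theorem stmt12 {q m t : ℕ} (hq : 2 ≤ q) (hm : Even m) (ht : t ≤ q ^ m)
    (h : ∀ α : Fin m → ℕ, (∀ i, α i ≤ q - 1) →
      ∏ i, (α i + 1) < q ^ m - t → q ^ m - t ≤ ∏ i, (q - α i)) :
    q ^ m - q ^ (m / 2) ≤ t := by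
  set α : Fin m → ℕ := fun i => if (i : ℕ) < m / 2 then q - 1 else 0 with hα
  have hbound : ∀ i, α i ≤ q - 1 := by
    intro i; simp only [hα]; split <;> omega
  have hcard : (Finset.univ.filter (fun i : Fin m => (i : ℕ) < m / 2)).card = m / 2 := by
    have : (Finset.univ.filter (fun i : Fin m => (i : ℕ) < m / 2)) =
        (Finset.range (m / 2)).attachFin (fun n hn => lt_of_lt_of_le (Finset.mem_range.mp hn) (Nat.div_le_self m 2)) := by
      ext i
      simp [Finset.mem_attachFin]
    rw [this, Finset.card_attachFin, Finset.card_range]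
  have hcard2 : (Finset.univ.filter (fun i : Fin m => ¬ (i : ℕ) < m / 2)).card = m / 2 := by
    have := Finset.card_filter_add_card_filter_not (s := (Finset.univ : Finset (Fin m)))
      (p := fun i : Fin m => (i : ℕ) < m / 2)
    simp only [Finset.card_univ, Fintype.card_fin] at this
    obtain ⟨k, hk⟩ := hm
    omega
  have hp1 : ∏ i, (α i + 1) = q ^ (m / 2) := by
    have : ∀ i : Fin m, α i + 1 = if (i : ℕ) < m / 2 then q else 1 := by
      intro i; simp only [hα]; split <;> omega
    simp only [this, Finset.prod_ite, Finset.prod_const, hcard, hcard2, one_pow, mul_one]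
  have hp2 : ∏ i, (q - α i) = q ^ (m / 2) := by
    have : ∀ i : Fin m, q - α i = if (i : ℕ) < m / 2 then 1 else q := by
      intro i; simp only [hα]; split <;> omega
    simp only [this, Finset.prod_ite, Finset.prod_const, hcard, hcard2, one_pow, one_mul]
  by_cases hc : ∏ i, (α i + 1) < q ^ m - t
  · have := h α hbound hc
    rw [hp2] at this
    omega
  · rw [hp1] at hc
    omega
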